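/- arXiv:2207.13619 — 3 statements merged into one kernel-verified Lean document; each statement's English description precedes it below -/
import Mathlib

section
/- Consider a two-term (split) disjunction with terms P¹, P², optimal vertices p¹, p² at which the defining bases are unique (nondegenerate), and the simple point-ray hull P_D⁰ = conv({p¹,p²}) + cone(R⁰) where R⁰ consists of the extreme ray directions of the basis cones C¹, C² at p¹, p². Then every facet-defining inequality of P_D⁰ that is tight at both p¹ and p² is facet-defining for the disjunctive hull P_D = cl conv(P¹ ∪ P²). -/
open Pointwise

noncomputable section

/-- Dot product on `ℝⁿ`. -/
def dot {n : ℕ} (a x : Fin n → ℝ) : ℝ := ∑ i, a i * x i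

/-- Conical (nonnegative) hull of a set of rays. -/
def coneHull {n : ℕ} (R : Set (Fin n → ℝ)) : Set (Fin n → ℝ) :=
  {y | ∃ (s : Finset (Fin n → ℝ)) (c : (Fin n → ℝ) → ℝ),
      ↑s ⊆ R ∧ (∀ r ∈ s, 0 ≤ c r) ∧ y = ∑ r ∈ s, c r • r}

/-- The point-ray hull `conv(P) + cone(R)` (Minkowski sum). -/
def pointRayHull {n : ℕ} (P R : Set (Fin n → ℝ)) : Set (Fin n → ℝ) :=
  convexHull ℝ P + coneHull R

/-- A polyhedron: intersection of finitely many halfspaces. -/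
def IsPolyhedron {n : ℕ} (S : Set (Fin n → ℝ)) : Prop :=
  ∃ (m : ℕ) (A : Fin m → (Fin n → ℝ)) (b : Fin m → ℝ),
    S = {x | ∀ i, b i ≤ dot (A i) x}

/-- Recession cone of a set. -/
def recessionCone {n : ℕ} (S : Set (Fin n → ℝ)) : Set (Fin n → ℝ) :=
  {r | ∀ x ∈ S, ∀ t : ℝ, 0 ≤ t → x + t • r ∈ S}

/-- A set is pointed if its recession cone contains no line. -/
def IsPointed {n : ℕ} (S : Set (Fin n → ℝ)) : Prop :=
  ∀ r ∈ recessionCone S, -r ∈ recessionCone S → r = 0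

/-- `x` generates an extreme ray of the cone `C`: it is a nonzero element of `C` that
cannot be written as a sum of two elements of `C` not both parallel to it. -/
def IsExtremeRay {V : Type*} [AddCommGroup V] [Module ℝ V] (C : Set V) (x : V) : Prop :=
  x ∈ C ∧ x ≠ 0 ∧ ∀ y ∈ C, ∀ z ∈ C, x = y + z →
    (∃ t : ℝ, 0 ≤ t ∧ y = t • x) ∧ (∃ t : ℝ, 0 ≤ t ∧ z = t • x)

/-- Affine dimension of a subset of `ℝⁿ`. -/
def affDim {n : ℕ} (S : Set (Fin n → ℝ)) : ℕ :=
  Module.finrank ℝ (affineSpan ℝ S).direction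

/- ### Auxiliary lemmas -/

lemma dot_add' {n : ℕ} (a x y : Fin n → ℝ) : dot a (x + y) = dot a x + dot a y := by
  simp [dot, mul_add, Finset.sum_add_distrib]

lemma dot_smul' {n : ℕ} (a : Fin n → ℝ) (c : ℝ) (x : Fin n → ℝ) :
    dot a (c • x) = c * dot a x := by
  simp [dot, Finset.mul_sum, mul_left_comm]

/-- `dot a` as a linear map. -/
def dotL {n : ℕ} (a : Fin n → ℝ) : (Fin n → ℝ) →ₗ[ℝ] ℝ where
  toFun := dot a
  map_add' := dot_add' a
  map_smul' c x := dot_smul' a c x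

@[simp] lemma dotL_apply {n : ℕ} (a x : Fin n → ℝ) : dotL a x = dot a x := rfl

lemma dot_single' {n : ℕ} (a : Fin n → ℝ) (i : Fin n) : dot a (Pi.single i 1) = a i := by
  simp [dot, Pi.single_apply]

lemma zero_mem_coneHull {n : ℕ} (R : Set (Fin n → ℝ)) : 0 ∈ coneHull R :=
  ⟨∅, fun _ => 0, by simp, by simp, by simp⟩

lemma mem_coneHull_self {n : ℕ} {R : Set (Fin n → ℝ)} {v : Fin n → ℝ} (hv : v ∈ R) :
    v ∈ coneHull R :=
  ⟨{v}, fun _ => 1, by simpa using hv, by simp, by simp⟩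

lemma coneHull_mono {n : ℕ} {R R' : Set (Fin n → ℝ)} (h : R ⊆ R') :
    coneHull R ⊆ coneHull R' := by
  rintro y ⟨s, c, hs, hc, rfl⟩
  exact ⟨s, c, hs.trans h, hc, rfl⟩

lemma coneHull_subset_span {n : ℕ} (R : Set (Fin n → ℝ)) :
    coneHull R ⊆ (Submodule.span ℝ R : Set (Fin n → ℝ)) := by
  rintro y ⟨s, c, hs, hc, rfl⟩
  exact Submodule.sum_mem _ fun v hv =>
    Submodule.smul_mem _ _ (Submodule.subset_span (hs hv))

/-- Split disjunction with terms `P⁰ = P ∩ {π·x ≤ π₀}`, `P¹ = P ∩ {π·x ≥ π₀+1}`,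
`c`-optimal vertices `pᵗ` with unique nondegenerate bases (exactly `n` tight constraints with
linearly independent normals) and basis cones `Cᵗ = pᵗ + cone(r^{t,1},…,r^{t,n})`. Every
facet-defining inequality of the simple point-ray hull `P_D⁰ = conv({p⁰,p¹}) + cone(R⁰)` that is
tight at both `p⁰` and `p¹` is facet-defining for the disjunctive hull
`P_D = cl conv(P⁰ ∪ P¹)`. -/
theorem stmt_7 {n : ℕ} (P : Set (Fin n → ℝ)) (hpoly : IsPolyhedron P)
    (pi : Fin n → ℝ) (pi0 : ℝ)
    (Pt : Fin 2 → Set (Fin n → ℝ))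
    (hsplit0 : Pt 0 = {x ∈ P | dot pi x ≤ pi0})
    (hsplit1 : Pt 1 = {x ∈ P | pi0 + 1 ≤ dot pi x})
    (hpointed : ∀ t, IsPointed (Pt t))
    (c : Fin n → ℝ)
    (m : Fin 2 → ℕ) (A : ∀ t, Fin (m t) → (Fin n → ℝ)) (b : ∀ t, Fin (m t) → ℝ)
    (hrep : ∀ t, Pt t = {x | ∀ i, b t i ≤ dot (A t i) x})
    (p : Fin 2 → (Fin n → ℝ))
    (hvert : ∀ t, p t ∈ Set.extremePoints ℝ (Pt t))
    (hopt : ∀ t, ∀ x ∈ Pt t, dot c (p t) ≤ dot c x)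
    (e : ∀ t, Fin n → Fin (m t)) (hinj : ∀ t, Function.Injective (e t))
    (htightset : ∀ t i, dot (A t i) (p t) = b t i ↔ i ∈ Set.range (e t))
    (hnormindep : ∀ t, LinearIndependent ℝ (fun j => A t (e t j)))
    (r : Fin 2 → Fin n → (Fin n → ℝ))
    (hbasiscone : ∀ t, ({p t} + coneHull (Set.range (r t)) : Set (Fin n → ℝ)) =
      {x | ∀ j, b t (e t j) ≤ dot (A t (e t j)) x})
    (PD0 : Set (Fin n → ℝ))
    (hPD0 : PD0 = convexHull ℝ {p 0, p 1} + coneHull (⋃ t, Set.range (r t)))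
    (α : Fin n → ℝ) (β : ℝ)
    (hvalid0 : ∀ x ∈ PD0, β ≤ dot α x)
    (hfacet0 : affDim (PD0 ∩ {x | dot α x = β}) = n - 1)
    (htight0 : dot α (p 0) = β) (htight1 : dot α (p 1) = β) :
    (∀ x ∈ closure (convexHull ℝ (Pt 0 ∪ Pt 1)), β ≤ dot α x) ∧
      affDim (closure (convexHull ℝ (Pt 0 ∪ Pt 1)) ∩ {x | dot α x = β}) = n - 1 := by
  classical
  have htight : ∀ t : Fin 2, dot α (p t) = β := by
    intro t; fin_cases t; exacts [htight0, htight1]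
  have hpmem : ∀ t, p t ∈ Pt t := fun t => (hvert t).1
  have hpconv : ∀ t : Fin 2, p t ∈ convexHull ℝ ({p 0, p 1} : Set (Fin n → ℝ)) := by
    intro t
    apply subset_convexHull
    fin_cases t
    · exact Set.mem_insert _ _
    · exact Set.mem_insert_of_mem _ rfl
  -- each term is inside its basis cone
  have hPtB : ∀ t, Pt t ⊆ {p t} + coneHull (Set.range (r t)) := by
    intro t x hx
    rw [hbasiscone t]
    intro j
    rw [hrep t] at hx
    exact hx (e t j)
  have hBPD0 : ∀ t : Fin 2, ({p t} + coneHull (Set.range (r t)) : Set (Fin n → ℝ)) ⊆ PD0 := by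
    intro t x hx
    rcases Set.mem_add.1 hx with ⟨u, hu, y, hy, rfl⟩
    rcases Set.mem_singleton_iff.1 hu with rfl
    rw [hPD0]
    exact Set.add_mem_add (hpconv t)
      (coneHull_mono (Set.subset_iUnion (fun t => Set.range (r t)) t) hy)
  have hPtPD0 : ∀ t, Pt t ⊆ PD0 := fun t => (hPtB t).trans (hBPD0 t)
  have hsubPD0 : Pt 0 ∪ Pt 1 ⊆ PD0 := Set.union_subset (hPtPD0 0) (hPtPD0 1)
  -- validity of the inequality for the disjunctive hull
  have hhalf : closure (convexHull ℝ (Pt 0 ∪ Pt 1)) ⊆ {x | β ≤ dot α x} := by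
    apply closure_minimal
    · exact convexHull_min (fun x hx => hvalid0 x (hsubPD0 hx))
        (convex_halfSpace_ge ⟨dot_add' α, fun c x => dot_smul' α c x⟩ β)
    · have hcont : Continuous (dotL α) := (dotL α).continuous_of_finiteDimensional
      exact isClosed_le continuous_const hcont
  refine ⟨fun x hx => hhalf hx, ?_⟩
  -- notation
  set R0 : Set (Fin n → ℝ) := ⋃ t, Set.range (r t) with hR0
  set G : Set (Fin n → ℝ) := {p 1 - p 0} ∪ {v | v ∈ R0 ∧ dot α v = 0} with hG
  set W : Submodule ℝ (Fin n → ℝ) := Submodule.span ℝ G with hW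
  set F : Set (Fin n → ℝ) :=
    closure (convexHull ℝ (Pt 0 ∪ Pt 1)) ∩ {x | dot α x = β} with hF
  have hraynn : ∀ v ∈ R0, 0 ≤ dot α v := by
    intro v hv
    have h1 : p 0 + v ∈ PD0 := by
      rw [hPD0]; exact Set.add_mem_add (hpconv 0) (mem_coneHull_self hv)
    have h2 := hvalid0 _ h1
    rw [dot_add', htight0] at h2
    linarith
  have hconeineq : ∀ t j j', 0 ≤ dot (A t (e t j')) (r t j) := by
    intro t j j'
    have h1 : p t + r t j ∈ ({p t} + coneHull (Set.range (r t)) : Set (Fin n → ℝ)) :=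
      Set.add_mem_add rfl (mem_coneHull_self ⟨j, rfl⟩)
    rw [hbasiscone t] at h1
    have h2 := h1 j'
    have h3 : dot (A t (e t j')) (p t) = b t (e t j') := (htightset t (e t j')).2 ⟨j', rfl⟩
    rw [dot_add', h3] at h2
    linarith
  -- small feasible step along a basis ray
  have hstep : ∀ t j, ∃ ε : ℝ, 0 < ε ∧ p t + ε • r t j ∈ Pt t := by
    intro t j
    have hAp : ∀ i, b t i ≤ dot (A t i) (p t) := by
      have h := hpmem t; rw [hrep t] at h; exact h
    have key : ∀ i : Fin (m t), ∃ ε : ℝ, 0 < ε ∧ ∀ ε' : ℝ, 0 < ε' → ε' ≤ ε →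
        b t i ≤ dot (A t i) (p t) + ε' * dot (A t i) (r t j) := by
      intro i
      by_cases hi : i ∈ Set.range (e t)
      · obtain ⟨j', rfl⟩ := hi
        refine ⟨1, one_pos, fun ε' hε' _ => ?_⟩
        have h1 := mul_nonneg hε'.le (hconeineq t j j')
        linarith [hAp (e t j')]
      · have hs : b t i < dot (A t i) (p t) :=
          lt_of_le_of_ne (hAp i) fun h => hi ((htightset t i).1 h.symm)
        by_cases hg : 0 ≤ dot (A t i) (r t j)
        · refine ⟨1, one_pos, fun ε' hε' _ => ?_⟩
          have h1 := mul_nonneg hε'.le hg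
          linarith
        · push_neg at hg
          refine ⟨(dot (A t i) (p t) - b t i) / (-(dot (A t i) (r t j))),
            div_pos (by linarith) (by linarith), fun ε' hε' hle => ?_⟩
          have h1 : ε' * (-(dot (A t i) (r t j))) ≤ dot (A t i) (p t) - b t i :=
            (le_div_iff₀ (by linarith)).1 hle
          linarith
    choose εf hεpos hεf using key
    rcases isEmpty_or_nonempty (Fin (m t)) with hm | hm
    · refine ⟨1, one_pos, ?_⟩
      rw [hrep t]; intro i; exact isEmptyElim i
    · have hne : (Finset.univ : Finset (Fin (m t))).Nonempty := Finset.univ_nonempty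
      have hpos : 0 < Finset.univ.inf' hne εf :=
        (Finset.lt_inf'_iff hne).2 fun i _ => hεpos i
      refine ⟨_, hpos, ?_⟩
      rw [hrep t]; intro i
      have h2 := hεf i _ hpos (Finset.inf'_le εf (Finset.mem_univ i))
      rw [dot_add', dot_smul']
      exact h2
  -- `p t` belongs to the face of the disjunctive hull
  have hPtsub : ∀ t : Fin 2, Pt t ⊆ Pt 0 ∪ Pt 1 := by
    intro t; fin_cases t
    exacts [Set.subset_union_left, Set.subset_union_right]
  have hpF : ∀ t : Fin 2, p t ∈ F := by
    intro t
    exact ⟨subset_closure (subset_convexHull ℝ _ (hPtsub t (hpmem t))), htight t⟩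
  -- W is contained in the direction of the PD0-face
  have hpS0 : ∀ t : Fin 2, p t ∈ PD0 ∩ {x | dot α x = β} :=
    fun t => ⟨hPtPD0 t (hpmem t), htight t⟩
  have hGdir0 : W ≤ (affineSpan ℝ (PD0 ∩ {x | dot α x = β})).direction := by
    rw [hW]
    apply Submodule.span_le.2
    rintro v (hv | ⟨hvR0, hv0⟩)
    · rcases Set.mem_singleton_iff.1 hv with rfl
      have h := AffineSubspace.vsub_mem_direction
        (mem_affineSpan ℝ (hpS0 1)) (mem_affineSpan ℝ (hpS0 0))
      simpa [vsub_eq_sub] using h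
    · have hmemq : p 0 + v ∈ PD0 := by
        rw [hPD0]; exact Set.add_mem_add (hpconv 0) (mem_coneHull_self hvR0)
      have htq : dot α (p 0 + v) = β := by rw [dot_add', htight0, hv0, add_zero]
      have hmem2 : p 0 + v ∈ PD0 ∩ {x | dot α x = β} := ⟨hmemq, htq⟩
      have h := AffineSubspace.vsub_mem_direction
        (mem_affineSpan ℝ hmem2) (mem_affineSpan ℝ (hpS0 0))
      simpa [vsub_eq_sub] using h
  -- the PD0-face is contained in p0 + W
  have hS0W : PD0 ∩ {x | dot α x = β} ⊆ (AffineSubspace.mk' (p 0) W : Set (Fin n → ℝ)) := by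
    rintro x ⟨hx, hxt⟩
    rw [hPD0] at hx
    rcases Set.mem_add.1 hx with ⟨q, hq, y, hy, rfl⟩
    rw [convexHull_pair] at hq
    obtain ⟨a, bb, ha, hb, hab, rfl⟩ := hq
    obtain ⟨s, cc, hsR, hcc, rfl⟩ := hy
    have hms : dot α (∑ v ∈ s, cc v • v) = ∑ v ∈ s, cc v * dot α v := by
      rw [show dot α (∑ v ∈ s, cc v • v) = dotL α (∑ v ∈ s, cc v • v) from rfl, map_sum]
      simp [dot_smul']
    have hx' : dot α (a • p 0 + bb • p 1 + ∑ v ∈ s, cc v • v) = β := hxt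
    rw [dot_add', dot_add', dot_smul', dot_smul', htight0, htight1, hms] at hx'
    have habβ : a * β + bb * β = β := by rw [← add_mul, hab, one_mul]
    have hsum0 : ∑ v ∈ s, cc v * dot α v = 0 := by linarith
    have hterm : ∀ v ∈ s, cc v * dot α v = 0 :=
      (Finset.sum_eq_zero_iff_of_nonneg fun v hv =>
        mul_nonneg (hcc v hv) (hraynn v (hsR hv))).1 hsum0
    apply AffineSubspace.mem_mk'.2
    have hrw : (a • p 0 + bb • p 1 + ∑ v ∈ s, cc v • v) -ᵥ p 0
        = bb • (p 1 - p 0) + ∑ v ∈ s, cc v • v := by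
      have ha' : a = 1 - bb := by linarith
      rw [vsub_eq_sub, ha']
      module
    rw [hrw]
    refine W.add_mem (W.smul_mem _ (Submodule.subset_span (Or.inl rfl))) ?_
    refine Submodule.sum_mem _ fun v hv => ?_
    rcases eq_or_ne (cc v) 0 with h0 | h0
    · simp [h0]
    · have hv0 : dot α v = 0 := by
        rcases mul_eq_zero.1 (hterm v hv) with h | h
        · exact absurd h h0
        · exact h
      exact W.smul_mem _ (Submodule.subset_span (Or.inr ⟨hsR hv, hv0⟩))
  -- hence finrank W = n - 1
  have hd0 : Module.finrank ℝ W = n - 1 := by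
    have h1 : affineSpan ℝ (PD0 ∩ {x | dot α x = β}) ≤ AffineSubspace.mk' (p 0) W :=
      affineSpan_le.2 hS0W
    have h2 := AffineSubspace.direction_le h1
    rw [AffineSubspace.direction_mk'] at h2
    have h3 := Submodule.finrank_mono h2
    have h4 := Submodule.finrank_mono hGdir0
    unfold affDim at hfacet0
    omega
  -- lower bound for the disjunctive hull face
  have hGdirF : W ≤ (affineSpan ℝ F).direction := by
    rw [hW]
    apply Submodule.span_le.2
    rintro v (hv | ⟨hvR0, hv0⟩)
    · rcases Set.mem_singleton_iff.1 hv with rfl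
      have h := AffineSubspace.vsub_mem_direction
        (mem_affineSpan ℝ (hpF 1)) (mem_affineSpan ℝ (hpF 0))
      simpa [vsub_eq_sub] using h
    · rcases Set.mem_iUnion.1 hvR0 with ⟨t, j, rfl⟩
      obtain ⟨ε, hε, hmem⟩ := hstep t j
      have hq : p t + ε • r t j ∈ F := by
        refine ⟨subset_closure (subset_convexHull ℝ _ (hPtsub t hmem)), ?_⟩
        show dot α (p t + ε • r t j) = β
        rw [dot_add', dot_smul', htight t, hv0, mul_zero, add_zero]
      have h := AffineSubspace.vsub_mem_direction
        (mem_affineSpan ℝ hq) (mem_affineSpan ℝ (hpF t))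
      have h2 : ε • r t j ∈ (affineSpan ℝ F).direction := by
        simpa [vsub_eq_sub] using h
      have h3 := (affineSpan ℝ F).direction.smul_mem ε⁻¹ h2
      simpa [smul_smul, inv_mul_cancel₀ hε.ne'] using h3
  have hlow : n - 1 ≤ Module.finrank ℝ (affineSpan ℝ F).direction :=
    hd0 ▸ Submodule.finrank_mono hGdirF
  -- upper bound for the disjunctive hull face
  have hup : Module.finrank ℝ (affineSpan ℝ F).direction ≤ n - 1 := by
    by_cases hα : α = 0
    · -- degenerate case: everything lies in p0 + W
      have hdotzero : ∀ x : Fin n → ℝ, dot α x = 0 := by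
        intro x; simp [hα, dot]
      have hR0W : R0 ⊆ (W : Set (Fin n → ℝ)) :=
        fun v hv => Submodule.subset_span (Or.inr ⟨hv, hdotzero v⟩)
      have hsub : Pt 0 ∪ Pt 1 ⊆ (AffineSubspace.mk' (p 0) W : Set (Fin n → ℝ)) := by
        intro x hx
        have hx' : ∃ t : Fin 2, x ∈ Pt t := by
          rcases hx with h | h; exacts [⟨0, h⟩, ⟨1, h⟩]
        obtain ⟨t, hxt⟩ := hx'
        rcases Set.mem_add.1 (hPtB t hxt) with ⟨u, hu, y, hy, rfl⟩
        rcases Set.mem_singleton_iff.1 hu with rfl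
        have hyW : y ∈ W := by
          have h1 : y ∈ Submodule.span ℝ R0 :=
            coneHull_subset_span R0 (coneHull_mono (Set.subset_iUnion _ t) hy)
          exact Submodule.span_le.2 hR0W h1
        have hptW : p t - p 0 ∈ W := by
          fin_cases t
          · simpa using W.zero_mem
          · exact Submodule.subset_span (Or.inl rfl)
        apply AffineSubspace.mem_mk'.2
        have hrw : (p t + y) -ᵥ p 0 = (p t - p 0) + y := by
          rw [vsub_eq_sub]; abel
        rw [hrw]
        exact W.add_mem hptW hyW
      have hclosed : IsClosed ((AffineSubspace.mk' (p 0) W : AffineSubspace ℝ (Fin n → ℝ)) :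
          Set (Fin n → ℝ)) := AffineSubspace.closed_of_finiteDimensional _
      have hFsub : F ⊆ (AffineSubspace.mk' (p 0) W : Set (Fin n → ℝ)) :=
        Set.inter_subset_left.trans
          (closure_minimal (convexHull_min hsub (AffineSubspace.convex _)) hclosed)
      have h1 := AffineSubspace.direction_le (affineSpan_le.2 hFsub)
      rw [AffineSubspace.direction_mk'] at h1
      exact hd0 ▸ Submodule.finrank_mono h1
    · -- nondegenerate case: the face lies in a hyperplane
      obtain ⟨i, hi0⟩ := Function.ne_iff.1 hα
      have hi : α i ≠ 0 := by simpa using hi0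
      have hker : Module.finrank ℝ (LinearMap.ker (dotL α)) = n - 1 := by
        have hrange : LinearMap.range (dotL α) = ⊤ := by
          rw [LinearMap.range_eq_top]
          intro y
          refine ⟨(y / α i) • (Pi.single i 1 : Fin n → ℝ), ?_⟩
          rw [map_smul]
          simp only [dotL_apply, dot_single', smul_eq_mul]
          field_simp
        have h1 := LinearMap.finrank_range_add_finrank_ker (dotL α)
        rw [hrange, finrank_top] at h1
        rw [Module.finrank_self, Module.finrank_fin_fun] at h1
        omega
      have hFsub : F ⊆ (AffineSubspace.mk' (p 0) (LinearMap.ker (dotL α)) :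
          Set (Fin n → ℝ)) := by
        rintro x ⟨-, hxt⟩
        apply AffineSubspace.mem_mk'.2
        rw [vsub_eq_sub, LinearMap.mem_ker, map_sub]
        simp only [dotL_apply]
        have hxe : dot α x = β := hxt
        rw [hxe, htight0, sub_self]
      have h1 := AffineSubspace.direction_le (affineSpan_le.2 hFsub)
      rw [AffineSubspace.direction_mk'] at h1
      exact hker ▸ Submodule.finrank_mono h1
  unfold affDim
  omega
end
end

section
/- Under the hypotheses that c·r ≥ 0 for every ray r in R⁰ and p* minimizes c over P⁰ ⊇ {p*}, the minimum of c·x over the disjunctive hull P_D = cl conv(∪_t Pᵗ) equals c·p*, whenever Pᵗ ⊆ conv(P⁰) + cone(R⁰) and p* ∈ Pᵗ* for some t*. -/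
open Pointwise

noncomputable section

lemma dot_linear {n : ℕ} (c : Fin n → ℝ) : IsLinearMap ℝ (dot c) := by
  constructor
  · intro x y; simp [dot, mul_add, Finset.sum_add_distrib]
  · intro t x; simp [dot, Finset.mul_sum]; ring_nf; simp [mul_comm, mul_left_comm]

lemma dot_continuous {n : ℕ} (c : Fin n → ℝ) : Continuous (dot c) := by
  unfold dot
  exact continuous_finset_sum _ fun i _ => (continuous_const.mul (continuous_apply i))

/-- If `c·r ≥ 0` for every ray of `R⁰`, `p* = p^{t*}` minimizes `c` over
`P⁰ = {pᵗ}`, each term `Pᵗ` satisfies `Pᵗ ⊆ conv(P⁰) + cone(R⁰)` and `p* ∈ P^{t*}`, then the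
minimum of `c·x` over the disjunctive hull `P_D = cl conv(∪ₜ Pᵗ)` equals `c·p*` (attained at
`p*`). -/
theorem stmt_11 {n : ℕ} {T : Type*} [Fintype T] (c : Fin n → ℝ)
    (Pt : T → Set (Fin n → ℝ)) (hpoly : ∀ t, IsPolyhedron (Pt t))
    (p : T → (Fin n → ℝ)) (r : T → Fin n → (Fin n → ℝ))
    (hmem : ∀ t, p t ∈ Pt t)
    (hopt : ∀ t, ∀ x ∈ Pt t, dot c (p t) ≤ dot c x)
    (hray : ∀ t j, 0 ≤ dot c (r t j))
    (tstar : T) (hstar : ∀ t, dot c (p tstar) ≤ dot c (p t))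
    (hsand : ∀ t, Pt t ⊆ pointRayHull (Set.range p) (⋃ t', Set.range (r t'))) :
    p tstar ∈ closure (convexHull ℝ (⋃ t, Pt t)) ∧
      ∀ x ∈ closure (convexHull ℝ (⋃ t, Pt t)), dot c (p tstar) ≤ dot c x := by
  set pstar := p tstar with hp
  have hL := dot_linear c
  -- the closed convex halfspace
  set S : Set (Fin n → ℝ) := {x | dot c pstar ≤ dot c x} with hS
  have hSconv : Convex ℝ S := convex_halfSpace_ge hL _
  have hSclosed : IsClosed S := isClosed_le continuous_const (dot_continuous c)
  have hUnion : (⋃ t, Pt t) ⊆ S := by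
    intro x hx
    rcases Set.mem_iUnion.1 hx with ⟨t, hxt⟩
    rcases hsand t hxt with ⟨y, hy, z, hz, hyz⟩
    have hy' : dot c pstar ≤ dot c y := by
      have : y ∈ S := by
        have : Set.range p ⊆ S := by
          rintro _ ⟨t', rfl⟩; exact hstar t'
        exact convexHull_min this hSconv hy
      exact this
    have hz' : 0 ≤ dot c z := by
      rcases hz with ⟨s, cf, hsub, hcf, rfl⟩
      have : dot c (∑ v ∈ s, cf v • v) = ∑ v ∈ s, cf v * dot c v := by
        simp only [dot, Finset.sum_apply, Pi.smul_apply, smul_eq_mul, Finset.mul_sum]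
        rw [Finset.sum_comm]
        refine Finset.sum_congr rfl fun v _ => ?_
        exact Finset.sum_congr rfl fun i _ => by ring
      rw [this]
      refine Finset.sum_nonneg fun v hv => ?_
      have hvR := hsub hv
      rcases Set.mem_iUnion.1 hvR with ⟨t', hvt'⟩
      rcases hvt' with ⟨j, rfl⟩
      exact mul_nonneg (hcf _ hv) (hray t' j)
    have : dot c x = dot c y + dot c z := by
      rw [← hyz]; exact hL.map_add y z
    simp only [S, Set.mem_setOf_eq]
    rw [this]
    linarith
  have hCl : closure (convexHull ℝ (⋃ t, Pt t)) ⊆ S :=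
    closure_minimal (convexHull_min hUnion hSconv) hSclosed
  refine ⟨?_, fun x hx => hCl hx⟩
  exact subset_closure (subset_convexHull ℝ _ (Set.mem_iUnion.2 ⟨tstar, hmem tstar⟩))
end
end

section
/- Let T be finite and for each t ∈ T let pᵗ ∈ ℝⁿ and let Nᵗ be a finite set of points, one on each edge of the polyhedron Pᵗ emanating from the vertex pᵗ, so that the cone pᵗ + cone{q − pᵗ : q ∈ Nᵗ} contains Pᵗ. If (α, β) satisfies α·q ≥ β for all q ∈ ∪_t ({pᵗ} ∪ Nᵗ) and additionally α·pᵗ = β for all t ∈ T, then α·x ≥ β is valid for cl conv(∪_t Pᵗ). -/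
open Pointwise

noncomputable section

lemma dot_isLinear {n : ℕ} (a : Fin n → ℝ) : IsLinearMap ℝ (dot a) := by
  constructor
  · intro x y
    simp [dot, mul_add, Finset.sum_add_distrib]
  · intro c x
    simp [dot, Finset.mul_sum, mul_comm, mul_left_comm]

lemma dot_sum {n : ℕ} (a : Fin n → ℝ) (s : Finset (Fin n → ℝ))
    (f : (Fin n → ℝ) → (Fin n → ℝ)) :
    dot a (∑ r ∈ s, f r) = ∑ r ∈ s, dot a (f r) := by
  simp only [dot, Finset.sum_apply, Finset.mul_sum]
  exact Finset.sum_comm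

/-- For each term let `Nᵗ ⊆ Pᵗ` be points on the edges of `Pᵗ` at its vertex
`pᵗ`, generating the tangent cone: `Pᵗ ⊆ pᵗ + cone{q − pᵗ : q ∈ Nᵗ}`. If `(α, β)` satisfies
`α·q ≥ β` for all `q ∈ ∪ₜ ({pᵗ} ∪ Nᵗ)` and moreover `α·pᵗ = β` for all `t`, then `α·x ≥ β` is
valid for `cl conv(∪ₜ Pᵗ)`. -/
theorem stmt_13 {n : ℕ} {T : Type*} [Fintype T]
    (Pt : T → Set (Fin n → ℝ)) (hpoly : ∀ t, IsPolyhedron (Pt t))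
    (hpointed : ∀ t, IsPointed (Pt t))
    (p : T → (Fin n → ℝ)) (hvert : ∀ t, p t ∈ Set.extremePoints ℝ (Pt t))
    (N : T → Set (Fin n → ℝ)) (hNfin : ∀ t, (N t).Finite)
    (hNsub : ∀ t, N t ⊆ Pt t)
    (hcone : ∀ t, Pt t ⊆ {p t} + coneHull ((fun q => q - p t) '' N t))
    (α : Fin n → ℝ) (β : ℝ)
    (hq : ∀ t, ∀ q ∈ insert (p t) (N t), β ≤ dot α q)
    (hpt : ∀ t, dot α (p t) = β) :
    ∀ x ∈ closure (convexHull ℝ (⋃ t, Pt t)), β ≤ dot α x := by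
  -- The halfspace is closed and convex, so it suffices to show each `Pt t` is inside it.
  have hlin := dot_isLinear α
  have hcont : Continuous (dot α) := by
    unfold dot; fun_prop
  have hsub : (⋃ t, Pt t) ⊆ {x | β ≤ dot α x} := by
    rintro x hx
    obtain ⟨_, ⟨t, rfl⟩, hxt⟩ := hx
    obtain ⟨u, hu, y, hy, rfl⟩ := hcone t hxt
    obtain ⟨s, c, hsR, hc, rfl⟩ := hy
    rcases hu with rfl
    have hdy : 0 ≤ dot α (∑ r ∈ s, c r • r) := by
      rw [dot_sum]
      apply Finset.sum_nonneg
      intro r hr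
      have hrR := hsR hr
      obtain ⟨q, hqN, rfl⟩ := hrR
      have h1 : β ≤ dot α q := hq t q (Set.mem_insert_of_mem _ hqN)
      have h2 : dot α (q - p t) = dot α q - dot α (p t) := by
        have := (IsLinearMap.mk' _ hlin).map_sub q (p t)
        simpa using this
      rw [hlin.map_smul]
      have : 0 ≤ dot α (q - p t) := by rw [h2, hpt t]; linarith
      exact mul_nonneg (hc _ hr) this
    have heq : dot α (p t + ∑ r ∈ s, c r • r)
        = dot α (p t) + dot α (∑ r ∈ s, c r • r) := hlin.map_add _ _
    show β ≤ dot α (p t + ∑ r ∈ s, c r • r)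
    rw [heq, hpt t]
    linarith
  intro x hx
  have hconv : Convex ℝ {x : Fin n → ℝ | β ≤ dot α x} := convex_halfSpace_ge hlin β
  have hclosed : IsClosed {x : Fin n → ℝ | β ≤ dot α x} :=
    isClosed_le continuous_const hcont
  have h1 : convexHull ℝ (⋃ t, Pt t) ⊆ {x | β ≤ dot α x} := convexHull_min hsub hconv
  exact closure_minimal h1 hclosed hx
end
end
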